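/- Let f : X → X be a topologically exact continuous map on a compact metric space, φ : X → ℝ continuous, and suppose every point has at least one preimage. Let ν be a Borel probability on X satisfying ∫ L_φ g dν = ρ ∫ g dν for all continuous g, where L_φ g(x) = Σ_{f(y)=x} e^{φ(y)} g(y) (each x having finitely many preimages) and ρ > 0. Then ν has full support: ν(A) > 0 for every nonempty open set A. -/

import Mathlib

open MeasureTheory

/-- The Ruelle–Perron–Frobenius (transfer) operator
`L_φ g (x) = Σ_{f(y) = x} e^{φ(y)} g(y)`, for a map with finite fibers. -/
noncomputable def transferOp {X : Type*} (f : X → X) (φ : X → ℝ)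
    (hfin : ∀ x : X, (f ⁻¹' {x}).Finite) (g : X → ℝ) (x : X) : ℝ :=
  ∑ y ∈ (hfin x).toFinset, Real.exp (φ y) * g y

lemma transferOp_nonneg {X : Type*} (f : X → X) (φ : X → ℝ)
    (hfin : ∀ x : X, (f ⁻¹' {x}).Finite) (g : X → ℝ) (hg : ∀ y, 0 ≤ g y) (x : X) :
    0 ≤ transferOp f φ hfin g x :=
  Finset.sum_nonneg fun y _ => mul_nonneg (Real.exp_pos _).le (hg y)

lemma transferOp_pos {X : Type*} (f : X → X) (φ : X → ℝ)
    (hfin : ∀ x : X, (f ⁻¹' {x}).Finite) (g : X → ℝ) (hg : ∀ y, 0 ≤ g y)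
    (x y : X) (hy : f y = x) (hgy : 0 < g y) :
    0 < transferOp f φ hfin g x := by
  apply Finset.sum_pos' (fun z _ => mul_nonneg (Real.exp_pos _).le (hg z))
  refine ⟨y, ?_, mul_pos (Real.exp_pos _) hgy⟩
  simp [Set.Finite.mem_toFinset, hy]

/-- If `f` is a topologically exact continuous map on a compact metric space
with finite nonempty fibers, `φ` is continuous, and `ν` is a Borel probability with
`L_φ* ν = ρ·ν` for some `ρ > 0`, then `ν` has full support: every nonempty open set has
positive measure. -/
theorem eigenmeasure_full_support {X : Type*} [MetricSpace X] [CompactSpace X]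
    [MeasurableSpace X] [BorelSpace X]
    (f : X → X) (hf : Continuous f)
    (hexact : ∀ U : Set X, IsOpen U → U.Nonempty → ∃ n : ℕ, f^[n] '' U = Set.univ)
    (hfin : ∀ x : X, (f ⁻¹' {x}).Finite) (hne : ∀ x : X, (f ⁻¹' {x}).Nonempty)
    (φ : X → ℝ) (hφ : Continuous φ)
    (hLcont : ∀ g : X → ℝ, Continuous g → Continuous (transferOp f φ hfin g))
    (ν : Measure X) [IsProbabilityMeasure ν] (ρ : ℝ) (hρ : 0 < ρ)
    (heig : ∀ g : X → ℝ, Continuous g →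
      ∫ x, transferOp f φ hfin g x ∂ν = ρ * ∫ x, g x ∂ν) :
    ∀ A : Set X, IsOpen A → A.Nonempty → 0 < ν A := by
  intro A hA hAne
  by_contra hcon
  have hA0 : ν A = 0 := by
    rcases (eq_or_lt_of_le (show 0 ≤ ν A from zero_le)) with h | h
    · exact h.symm
    · exact absurd h hcon
  have hXne : Nonempty X := ⟨hAne.choose⟩
  -- A is not the whole space
  have hAne_univ : A ≠ Set.univ := by
    intro h
    rw [h, measure_univ] at hA0
    exact one_ne_zero hA0
  have hAc_ne : Aᶜ.Nonempty := by
    rw [Set.nonempty_compl]; exact hAne_univ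
  -- bump function g
  set g : X → ℝ := fun x => Metric.infDist x Aᶜ with hg_def
  have hg_cont : Continuous g := Metric.continuous_infDist_pt _
  have hg_nonneg : ∀ x, 0 ≤ g x := fun x => Metric.infDist_nonneg
  have hg_pos : ∀ x ∈ A, 0 < g x := by
    intro x hx
    show 0 < Metric.infDist x Aᶜ
    exact ((isClosed_compl_iff.mpr hA).notMem_iff_infDist_pos hAc_ne).mp (by simpa using hx)
  have hg_zero : ∀ x ∉ A, g x = 0 := fun x hx => Metric.infDist_zero_of_mem (by simpa using hx)
  -- iterated operator
  set gs : ℕ → X → ℝ := fun n => (transferOp f φ hfin)^[n] g with hgs_def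
  have hgs_succ : ∀ n, gs (n+1) = transferOp f φ hfin (gs n) := by
    intro n
    simp [hgs_def, Function.iterate_succ_apply']
  have hgs_cont : ∀ n, Continuous (gs n) := by
    intro n; induction n with
    | zero => exact hg_cont
    | succ n ih => rw [hgs_succ]; exact hLcont _ ih
  have hgs_nonneg : ∀ n x, 0 ≤ gs n x := by
    intro n; induction n with
    | zero => exact hg_nonneg
    | succ n ih => intro x; rw [hgs_succ]; exact transferOp_nonneg _ _ _ _ ih x
  have hgs_pos : ∀ n x y, f^[n] y = x → 0 < g y → 0 < gs n x := by
    intro n; induction n with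
    | zero => intro x y hxy hy; simpa [hgs_def] using hxy ▸ hy
    | succ n ih =>
      intro x y hxy hy
      rw [hgs_succ]
      refine transferOp_pos _ _ _ _ (hgs_nonneg n) x (f^[n] y) ?_ (ih _ y rfl hy)
      rw [← Function.iterate_succ_apply' f n y]; exact hxy
  have hgs_int : ∀ n, ∫ x, gs n x ∂ν = ρ ^ n * ∫ x, g x ∂ν := by
    intro n; induction n with
    | zero => simp [hgs_def]
    | succ n ih =>
      rw [hgs_succ, heig _ (hgs_cont n), ih, pow_succ]
      ring
  -- ∫ g = 0
  have hg_ae : g =ᵐ[ν] 0 := by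
    refine measure_mono_null ?_ hA0
    intro x hx
    simp only [Set.mem_setOf_eq, Pi.zero_apply] at hx
    by_contra hxA
    exact hx (hg_zero x hxA)
  have hg_int0 : ∫ x, g x ∂ν = 0 := integral_eq_zero_of_ae hg_ae
  -- pick n with f^[n] '' A = univ
  obtain ⟨n, hn⟩ := hexact A hA hAne
  have hpos : ∀ x, 0 < gs n x := by
    intro x
    have : x ∈ f^[n] '' A := by rw [hn]; trivial
    obtain ⟨y, hyA, hyx⟩ := this
    exact hgs_pos n x y hyx (hg_pos y hyA)
  have hint : Integrable (gs n) ν := (hgs_cont n).integrable_of_hasCompactSupport (isClosed_tsupport _).isCompact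
  have h0 : ∫ x, gs n x ∂ν = 0 := by rw [hgs_int n, hg_int0, mul_zero]
  have : 0 < ∫ x, gs n x ∂ν := by
    rw [integral_pos_iff_support_of_nonneg (fun x => hgs_nonneg n x) hint]
    have : Function.support (gs n) = Set.univ := by
      ext x; simp [Function.mem_support, (hpos x).ne']
    rw [this, measure_univ]; exact one_pos
  rw [h0] at this
  exact lt_irrefl 0 this
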